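/- arXiv:1604.01745 — 2 statements merged into one kernel-verified Lean document; each statement's English description precedes it below -/
import Mathlib

section
/- Consider coupled dynamics x₁(t+1) = f₁(x₁(t), x₂(t), u₁), x₂(t+1) = f₂(x₁(t), x₂(t), u₂). Let R₁, R₂, and ε-inflated sets R₁^ε ⊇ R₁, R₂^ε ⊇ R₂ be given. Suppose patterns π₁ (length ℓ) and π₂ (length ℓ) and initial sets s₁ ⊆ R₁, s₂ ⊆ R₂ satisfy: the approximate sequences X^k_1 (with X⁰_1 = s₁, X^k_1 = f₁(X^{k-1}_1, R₂^ε, π₁(k))) and X^k_2 (with X⁰_2 = s₂, X^k_2 = f₂(R₁^ε, X^{k-1}_2, π₂(k))) satisfy X^k_1 ⊆ R₁^ε and X^k_2 ⊆ R₂^ε for 1 ≤ k ≤ ℓ−1, and X^ℓ_1 ⊆ R₁, X^ℓ_2 ⊆ R₂. Then for every (x₁, x₂) ∈ s₁ × s₂, the true joint trajectory under (π₁, π₂) satisfies: the first component lies in X^k_1 and the second in X^k_2 at every step k ≤ ℓ; in particular the final state lies in R₁ × R₂. -/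
/-- For coupled dynamics, if the approximate sequences (using the
inflated sets as over-approximations of the other component) stay in the inflated
sets at intermediate steps and end inside R₁, R₂, then every true joint trajectory
starting in s₁ × s₂ has its components inside the approximate sequences at every
step, and its final state lies in R₁ × R₂. -/
theorem stmt8 {n₁ n₂ : ℕ} {U₁ U₂ : Type*}
    (f₁ : (Fin n₁ → ℝ) → (Fin n₂ → ℝ) → U₁ → (Fin n₁ → ℝ))
    (f₂ : (Fin n₁ → ℝ) → (Fin n₂ → ℝ) → U₂ → (Fin n₂ → ℝ))
    (R₁ R₁ε s₁ : Set (Fin n₁ → ℝ)) (R₂ R₂ε s₂ : Set (Fin n₂ → ℝ))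
    (hR₁ : R₁ ⊆ R₁ε) (hR₂ : R₂ ⊆ R₂ε)
    (hs₁ : s₁ ⊆ R₁) (hs₂ : s₂ ⊆ R₂)
    (π₁ : ℕ → U₁) (π₂ : ℕ → U₂) (ℓ : ℕ) (hℓ : 1 ≤ ℓ)
    (X1 : ℕ → Set (Fin n₁ → ℝ)) (X2 : ℕ → Set (Fin n₂ → ℝ))
    (hX10 : X1 0 = s₁) (hX20 : X2 0 = s₂)
    (hX1k : ∀ k, X1 (k + 1) =
      {z | ∃ x ∈ X1 k, ∃ y ∈ R₂ε, z = f₁ x y (π₁ (k + 1))})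
    (hX2k : ∀ k, X2 (k + 1) =
      {z | ∃ x ∈ R₁ε, ∃ y ∈ X2 k, z = f₂ x y (π₂ (k + 1))})
    (hmid1 : ∀ k, 1 ≤ k → k ≤ ℓ - 1 → X1 k ⊆ R₁ε)
    (hmid2 : ∀ k, 1 ≤ k → k ≤ ℓ - 1 → X2 k ⊆ R₂ε)
    (hend1 : X1 ℓ ⊆ R₁) (hend2 : X2 ℓ ⊆ R₂) :
    ∀ x₁ ∈ s₁, ∀ x₂ ∈ s₂,
      ∀ traj : ℕ → (Fin n₁ → ℝ) × (Fin n₂ → ℝ),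
        traj 0 = (x₁, x₂) →
        (∀ k, traj (k + 1) =
          (f₁ (traj k).1 (traj k).2 (π₁ (k + 1)),
           f₂ (traj k).1 (traj k).2 (π₂ (k + 1)))) →
        (∀ k ≤ ℓ, (traj k).1 ∈ X1 k ∧ (traj k).2 ∈ X2 k) ∧
        (traj ℓ).1 ∈ R₁ ∧ (traj ℓ).2 ∈ R₂ := by
  intro x₁ hx₁ x₂ hx₂ traj h0 hstep
  have key : ∀ k ≤ ℓ, (traj k).1 ∈ X1 k ∧ (traj k).2 ∈ X2 k := by
    intro k
    induction k with
    | zero => intro _; rw [h0, hX10, hX20]; exact ⟨hx₁, hx₂⟩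
    | succ k ih =>
      intro hk
      have hk' : k ≤ ℓ := Nat.le_of_succ_le hk
      obtain ⟨h1, h2⟩ := ih hk'
      have h1ε : (traj k).1 ∈ R₁ε := by
        rcases Nat.eq_zero_or_pos k with rfl | hkpos
        · rw [h0] at h1 ⊢; rw [hX10] at h1; exact hR₁ (hs₁ h1)
        · exact hmid1 k hkpos (by omega) h1
      have h2ε : (traj k).2 ∈ R₂ε := by
        rcases Nat.eq_zero_or_pos k with rfl | hkpos
        · rw [h0] at h2 ⊢; rw [hX20] at h2; exact hR₂ (hs₂ h2)
        · exact hmid2 k hkpos (by omega) h2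
      rw [hstep, hX1k, hX2k]
      exact ⟨⟨_, h1, _, h2ε, rfl⟩, ⟨_, h1ε, _, h2, rfl⟩⟩
  exact ⟨key, hend1 (key ℓ le_rfl).1, hend2 (key ℓ le_rfl).2⟩
end

section
/- If A is an index set and for each i ∈ A a pattern length ℓᵢ ∈ {1, ..., K} and sets satisfy f(r_i, π_i) ⊆ R with |π_i| = ℓᵢ, and additionally every state reached at intermediate times stays in an inflated set R^ε, then any trajectory starting in R = ⋃ r_i under the induced switching control stays in R^ε at every discrete time t ∈ ℕ and visits R at an infinite, unbounded set of times. -/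
section Aux
variable {n : ℕ} {U : Type*} {I : Type*}
  (f : (Fin n → ℝ) → U → (Fin n → ℝ))
  (R : Set (Fin n → ℝ))
  (r : I → Set (Fin n → ℝ))
  (π : I → List U)

/-- State: last visit point, chosen tile, consumed prefix, remaining suffix. -/
@[reducible] def Stmt15St : Type _ :=
  {q : (Fin n → ℝ) × I × List U × List U //
    q.1 ∈ r q.2.1 ∧ q.2.2.1 ++ q.2.2.2 = π q.2.1 ∧ q.2.2.2 ≠ []}

variable (hR : ∀ i, r i ⊆ R)
  (g : (x : Fin n → ℝ) → x ∈ R → I)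
  (hg : ∀ x hx, x ∈ r (g x hx))
  (pne : ∀ i, π i ≠ [])
  (hctrl : ∀ i, ∀ x ∈ r i, (π i).foldl f x ∈ R)

open Classical in
noncomputable def stmt15Step (s : Stmt15St r π) : Stmt15St r π :=
  if hl : s.1.2.2.2.tail = [] then
    ⟨((π s.1.2.1).foldl f s.1.1, g ((π s.1.2.1).foldl f s.1.1) (hctrl _ _ s.2.1), [],
        π (g ((π s.1.2.1).foldl f s.1.1) (hctrl _ _ s.2.1))),
      hg _ _, by simp, pne _⟩
  else
    ⟨(s.1.1, s.1.2.1, s.1.2.2.1 ++ [s.1.2.2.2.head s.2.2.2], s.1.2.2.2.tail), s.2.1, by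
      have h1 : s.1.2.2.2.head s.2.2.2 :: s.1.2.2.2.tail = s.1.2.2.2 :=
        List.cons_head_tail s.2.2.2
      rw [List.append_assoc]
      simpa [h1] using s.2.2.1, hl⟩

end Aux

/-- If each tile r i of a finite cover of R has a pattern π i of
length between 1 and K with f(r i, π i) ⊆ R, and every prefix of π i keeps r i
inside the inflated set Rε ⊇ R, then from any initial state in R there is a
controlled trajectory (obtained by concatenating the chosen patterns) that stays
in Rε at every time and visits R at an unbounded set of times. -/
theorem stmt15 {n : ℕ} {U : Type*} [Fintype U] {I : Type*} [Fintype I]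
    (f : (Fin n → ℝ) → U → (Fin n → ℝ))
    (R Rε : Set (Fin n → ℝ)) (hRRε : R ⊆ Rε)
    (r : I → Set (Fin n → ℝ)) (hcov : R = ⋃ i, r i)
    (K : ℕ) (π : I → List U)
    (hlen : ∀ i, 1 ≤ (π i).length ∧ (π i).length ≤ K)
    (hctrl : ∀ i, ∀ x ∈ r i, (π i).foldl f x ∈ R)
    (hpre : ∀ i, ∀ π' : List U, π' <+: π i → ∀ x ∈ r i, π'.foldl f x ∈ Rε) :
    ∀ x₀ ∈ R, ∃ (traj : ℕ → (Fin n → ℝ)) (u : ℕ → U),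
      traj 0 = x₀ ∧
      (∀ t, traj (t + 1) = f (traj t) (u t)) ∧
      (∀ t, traj t ∈ Rε) ∧
      (∀ T : ℕ, ∃ t, T ≤ t ∧ traj t ∈ R) := by
  intro x₀ hx₀
  have hR : ∀ i, r i ⊆ R := fun i x hx => hcov ▸ Set.mem_iUnion.mpr ⟨i, hx⟩
  have hx : ∀ x ∈ R, ∃ i, x ∈ r i := fun x hx => Set.mem_iUnion.mp (hcov ▸ hx)
  choose g hg using hx
  have pne : ∀ i, π i ≠ [] := fun i => List.ne_nil_of_length_pos (hlen i).1
  set step : Stmt15St r π → Stmt15St r π := stmt15Step f R r π g hg pne hctrl with hstep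
  set s0 : Stmt15St r π :=
    ⟨(x₀, g x₀ hx₀, [], π (g x₀ hx₀)), hg x₀ hx₀, by simp, pne _⟩ with hs0
  set σ : ℕ → Stmt15St r π := fun t => step^[t] s0 with hσ
  have hσsucc : ∀ t, σ (t + 1) = step (σ t) := fun t => Function.iterate_succ_apply' step t s0
  set traj : ℕ → (Fin n → ℝ) := fun t => (σ t).1.2.2.1.foldl f (σ t).1.1 with htraj
  set u : ℕ → U := fun t => (σ t).1.2.2.2.head (σ t).2.2.2 with hu
  refine ⟨traj, u, ?_, ?_, ?_, ?_⟩
  · simp [htraj, hσ]; rfl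
  · intro t
    rw [htraj]
    simp only
    rw [hσsucc t]
    set s := σ t with hs
    show ((step s).1.2.2.1).foldl f (step s).1.1 = f (s.1.2.2.1.foldl f s.1.1) (u t)
    have hut : u t = s.1.2.2.2.head s.2.2.2 := rfl
    rw [hstep]
    unfold stmt15Step
    split
    · -- rest.tail = []
      rename_i hl
      simp only [List.foldl_nil]
      have hfold : ∀ (d rest : List U) (x : Fin n → ℝ) (hne : rest ≠ []),
          rest.tail = [] →
          List.foldl f x (d ++ rest) = f (List.foldl f x d) (rest.head hne) := by
        intro d rest x hne htl
        cases rest with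
        | nil => exact absurd rfl hne
        | cons a l =>
          simp only [List.tail_cons] at htl
          subst htl
          simp [List.foldl_append]
      have e1 : List.foldl f s.1.1 (π s.1.2.1) =
          List.foldl f s.1.1 (s.1.2.2.1 ++ s.1.2.2.2) := by rw [s.2.2.1]
      rw [hut, e1, hfold _ _ _ s.2.2.2 hl]
    · rename_i hl
      rw [hut]
      simp [List.foldl_append]
  · intro t
    exact hpre _ _ ⟨(σ t).1.2.2.2, (σ t).2.2.1⟩ _ (σ t).2.1
  · -- visits
    have key : ∀ m t, (σ t).1.2.2.2.length ≤ m →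
        ∃ t', t ≤ t' ∧ (σ t').1.2.2.1 = [] := by
      intro m
      induction m with
      | zero =>
        intro t h
        exact absurd (List.eq_nil_of_length_eq_zero (Nat.le_zero.mp h)) (σ t).2.2.2
      | succ m ih =>
        intro t h
        by_cases hl : (σ t).1.2.2.2.tail = []
        · refine ⟨t + 1, Nat.le_succ t, ?_⟩
          rw [hσsucc t, hstep]
          unfold stmt15Step
          rw [dif_pos hl]
        · have hrest : (σ (t + 1)).1.2.2.2 = (σ t).1.2.2.2.tail := by
            rw [hσsucc t, hstep]
            unfold stmt15Step
            rw [dif_neg hl]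
          have hlen' : (σ (t + 1)).1.2.2.2.length ≤ m := by
            rw [hrest, List.length_tail]
            omega
          obtain ⟨t', ht', hd⟩ := ih (t + 1) hlen'
          exact ⟨t', le_trans (Nat.le_succ t) ht', hd⟩
    intro T
    obtain ⟨t', ht', hd⟩ := key ((σ T).1.2.2.2.length) T le_rfl
    refine ⟨t', ht', ?_⟩
    have : traj t' = (σ t').1.1 := by rw [htraj]; simp only [hd, List.foldl_nil]
    rw [this]
    exact hR _ (σ t').2.1
end
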